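/- Let G(u,t) = ∫_u^t exp(-∫_u^v k(s) ds) dv where k is continuous with m_k < k(t) ≤ M_k and m_k > 0. Then for any α > 0, J(α,0,t) = ∫_0^t G(u,t)^α exp(-α ∫_u^t k(s) ds) du ≤ 1/(α m_k^(α+1)) for all t ≥ 0. -/

import Mathlib

open Real MeasureTheory
lemma expIntLin (c d a b : ℝ) (hc : c ≠ 0) :
    (∫ x in a..b, Real.exp (c * x + d)) =
      (Real.exp (c * b + d) - Real.exp (c * a + d)) / c := by
  rw [intervalIntegral.integral_comp_mul_add Real.exp hc d, integral_exp,
    smul_eq_mul]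
  ring

/-- With `G(u,t) = ∫_u^t exp(-∫_u^v k(s) ds) dv` and `k` continuous, `0 < m_k < k ≤ M_k`,
for any `α > 0`,
`J(α,0,t) = ∫_0^t G(u,t)^α exp(-α ∫_u^t k(s) ds) du ≤ 1/(α m_k^(α+1))` for all `t ≥ 0`. -/
theorem stmt1 (k : ℝ → ℝ) (mk Mk : ℝ) (hk : Continuous k) (hmk : 0 < mk)
    (hbound : ∀ t ≥ (0:ℝ), mk < k t ∧ k t ≤ Mk)
    (G : ℝ → ℝ → ℝ)
    (hG : ∀ u t : ℝ, G u t = ∫ v in u..t, Real.exp (-∫ s in u..v, k s))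
    (α : ℝ) (hα : 0 < α) (t : ℝ) (ht : 0 ≤ t) :
    (∫ u in (0:ℝ)..t, G u t ^ α * Real.exp (-α * ∫ s in u..t, k s))
      ≤ 1 / (α * mk ^ (α + 1)) := by
  have hkint : ∀ a b : ℝ, IntervalIntegrable k volume a b :=
    fun a b => hk.intervalIntegrable a b
  set F : ℝ → ℝ := fun x => ∫ s in (0:ℝ)..x, k s with hFdef
  have hFc : Continuous F := intervalIntegral.continuous_primitive hkint 0
  have hFsplit : ∀ u v : ℝ, (∫ s in u..v, k s) = F v - F u := fun u v =>
    (intervalIntegral.integral_interval_sub_left (hkint 0 v) (hkint 0 u)).symm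
  have hEc : Continuous fun v => Real.exp (-F v) := Real.continuous_exp.comp hFc.neg
  set H : ℝ → ℝ := fun x => ∫ v in (0:ℝ)..x, Real.exp (-F v) with hHdef
  have hHc : Continuous H :=
    intervalIntegral.continuous_primitive (fun a b => hEc.intervalIntegrable a b) 0
  have hEsplit : ∀ u v : ℝ, (∫ x in u..v, Real.exp (-F x)) = H v - H u := fun u v =>
    (intervalIntegral.integral_interval_sub_left (hEc.intervalIntegrable 0 v)
      (hEc.intervalIntegrable 0 u)).symm
  -- lower bound on ∫ k
  have intk : ∀ u v : ℝ, 0 ≤ u → u ≤ v → mk * (v - u) ≤ ∫ s in u..v, k s := by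
    intro u v hu huv
    have h1 : (∫ _s in u..v, (mk:ℝ)) ≤ ∫ s in u..v, k s :=
      intervalIntegral.integral_mono_on huv intervalIntegrable_const (hkint u v)
        (fun s hs => ((hbound s (hu.trans hs.1)).1).le)
    simpa [intervalIntegral.integral_const, smul_eq_mul, mul_comm] using h1
  -- rewrite G
  have hGrw : ∀ u τ : ℝ, G u τ = Real.exp (F u) * (H τ - H u) := by
    intro u τ
    rw [hG]
    have h1 : ∀ v : ℝ, Real.exp (-∫ s in u..v, k s)
        = Real.exp (F u) * Real.exp (-F v) := by
      intro v
      rw [hFsplit, ← Real.exp_add]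
      congr 1
      ring
    simp only [h1]
    rw [intervalIntegral.integral_const_mul, hEsplit]
  set c := α * mk with hcdef
  have hc : 0 < c := mul_pos hα hmk
  -- rewrite the integrand
  have hrw : ∀ u : ℝ, G u t ^ α * Real.exp (-α * ∫ s in u..t, k s)
      = (Real.exp (F u) * (H t - H u)) ^ α * Real.exp (-α * (F t - F u)) := by
    intro u
    rw [hGrw, hFsplit]
  simp only [hrw]
  have hcont : Continuous fun u =>
      (Real.exp (F u) * (H t - H u)) ^ α * Real.exp (-α * (F t - F u)) := by
    apply Continuous.mul
    · exact ((hFc.rexp.mul (continuous_const.sub hHc)).rpow_const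
        (fun x => Or.inr hα.le))
    · exact (continuous_const.mul (continuous_const.sub hFc)).rexp
  -- pointwise bound
  have key : ∀ u ∈ Set.Icc (0:ℝ) t,
      (Real.exp (F u) * (H t - H u)) ^ α * Real.exp (-α * (F t - F u))
        ≤ (1/mk) ^ α * Real.exp (c * u - c * t) := by
    intro u hu
    obtain ⟨hu0, hut⟩ := hu
    have hkb : mk * (t - u) ≤ ∫ s in u..t, k s := intk u t hu0 hut
    rw [hFsplit] at hkb
    have hGnn : 0 ≤ Real.exp (F u) * (H t - H u) := by
      rw [← hGrw, hG]
      exact intervalIntegral.integral_nonneg hut (fun v _ => (Real.exp_pos _).le)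
    have hGle : Real.exp (F u) * (H t - H u) ≤ 1/mk := by
      have e1 : Real.exp (F u) * (H t - H u)
          = ∫ v in u..t, Real.exp (F u) * Real.exp (-F v) := by
        rw [intervalIntegral.integral_const_mul, hEsplit]
      rw [e1]
      have e2 : (∫ v in u..t, Real.exp (F u) * Real.exp (-F v))
          ≤ ∫ v in u..t, Real.exp ((-mk) * v + mk * u) := by
        apply intervalIntegral.integral_mono_on hut
          ((continuous_const.mul hEc).intervalIntegrable u t)
          ((((continuous_const.mul continuous_id).add continuous_const).rexp).intervalIntegrable u t)
        intro v hv
        show Real.exp (F u) * Real.exp (-F v) ≤ _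
        rw [← Real.exp_add]
        apply Real.exp_le_exp.mpr
        have h3 : mk * (v - u) ≤ F v - F u := by
          have := intk u v hu0 hv.1
          rwa [hFsplit] at this
        simp only [Pi.add_apply, Pi.mul_apply, id_eq]
        linarith
      refine e2.trans ?_
      rw [expIntLin (-mk) (mk*u) u t (by linarith)]
      have h4 : -mk * u + mk * u = 0 := by ring
      rw [h4, Real.exp_zero]
      have h5 : (Real.exp (-mk * t + mk * u) - 1) / (-mk)
          = (1 - Real.exp (-mk * t + mk * u)) / mk := by ring
      rw [h5]
      have h6 := (Real.exp_pos (-mk * t + mk * u)).le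
      rw [div_le_div_iff₀ hmk hmk]
      nlinarith
    have hexp : Real.exp (-α * (F t - F u)) ≤ Real.exp (c * u - c * t) := by
      apply Real.exp_le_exp.mpr
      have : c * (t - u) ≤ α * (F t - F u) := by
        rw [hcdef]
        calc α * mk * (t - u) = α * (mk * (t - u)) := by ring
        _ ≤ α * (F t - F u) := by
            apply mul_le_mul_of_nonneg_left hkb hα.le
      linarith
    calc (Real.exp (F u) * (H t - H u)) ^ α * Real.exp (-α * (F t - F u))
        ≤ (1/mk) ^ α * Real.exp (-α * (F t - F u)) := by
          exact mul_le_mul_of_nonneg_right (Real.rpow_le_rpow hGnn hGle hα.le)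
            (Real.exp_pos _).le
      _ ≤ (1/mk) ^ α * Real.exp (c * u - c * t) := by
          exact mul_le_mul_of_nonneg_left hexp (by positivity)
  have hrcont : Continuous fun u : ℝ => (1/mk) ^ α * Real.exp (c * u - c * t) :=
    continuous_const.mul (((continuous_const.mul continuous_id).sub continuous_const).rexp)
  calc (∫ u in (0:ℝ)..t,
        (Real.exp (F u) * (H t - H u)) ^ α * Real.exp (-α * (F t - F u)))
      ≤ ∫ u in (0:ℝ)..t, (1/mk) ^ α * Real.exp (c * u - c * t) :=
        intervalIntegral.integral_mono_on ht (hcont.intervalIntegrable 0 t)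
          (hrcont.intervalIntegrable 0 t) key
    _ ≤ 1 / (α * mk ^ (α + 1)) := by
        rw [intervalIntegral.integral_const_mul]
        have h1 : ∀ u : ℝ, Real.exp (c * u - c * t) = Real.exp (c * u + (-(c*t))) := by
          intro u; rw [sub_eq_add_neg]
        simp only [h1]
        rw [expIntLin c (-(c*t)) 0 t hc.ne']
        have h2 : c * t + -(c * t) = 0 := by ring
        have h3 : c * 0 + -(c * t) = -(c*t) := by ring
        rw [h2, h3, Real.exp_zero]
        have h4 : ((1:ℝ)/mk) ^ α = 1 / mk ^ α := by
          rw [Real.div_rpow zero_le_one hmk.le, Real.one_rpow]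
        rw [h4]
        have h5 : mk ^ (α + 1) = mk ^ α * mk := by
          rw [Real.rpow_add hmk, Real.rpow_one]
        rw [h5]
        have hmkα : (0:ℝ) < mk ^ α := Real.rpow_pos_of_pos hmk α
        have h7 : (1 - Real.exp (-(c*t)))/c ≤ 1/c := by
          gcongr
          linarith [(Real.exp_pos (-(c*t))).le]
        have h8 : 1/mk^α * ((1 - Real.exp (-(c*t)))/c) ≤ 1/mk^α * (1/c) :=
          mul_le_mul_of_nonneg_left h7 (by positivity)
        refine h8.trans_eq ?_
        rw [hcdef]
        field_simp
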